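/- Let T be a generalized hyperbolic operator on B with splitting E⁻ ⊕ E⁺, and suppose x ∈ E⁻ has its entire forward orbit contained in E⁻ (T^n x ∈ E⁻ for all n ≥ 0). Then on the smallest closed T-invariant subspace X containing the orbit of x, T is a uniform expansion: ‖y‖ ≤ λ‖T y‖ for all y ∈ X. -/

import Mathlib

/-- if the entire forward orbit of x ∈ E⁻ stays in E⁻, then T is a
uniform expansion (‖y‖ ≤ λ‖T y‖) on the smallest closed T-invariant subspace containing
the orbit of x, namely the closed linear span of the full orbit. -/
theorem stmt10 {B : Type*} [NormedAddCommGroup B] [NormedSpace ℝ B] [CompleteSpace B]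
    (T : B ≃L[ℝ] B) (Em Ep : Submodule ℝ B)
    (hEmc : IsClosed (Em : Set B)) (hEpc : IsClosed (Ep : Set B))
    (hcompl : IsCompl Em Ep)
    (hTEp : ∀ x ∈ Ep, T x ∈ Ep) (hTEm : ∀ x ∈ Em, T.symm x ∈ Em)
    (lam : ℝ) (hlam0 : 0 < lam) (hlam1 : lam < 1)
    (hcon : ∀ x ∈ Ep, ‖T x‖ ≤ lam * ‖x‖) (hexp : ∀ x ∈ Em, ‖T.symm x‖ ≤ lam * ‖x‖)
    (x : B) (hx : x ∈ Em) (horb : ∀ n : ℕ, (T ^ (n : ℤ)) x ∈ Em) :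
    ∀ y ∈ (Submodule.span ℝ (Set.range fun n : ℤ => (T ^ n) x)).topologicalClosure,
      ‖y‖ ≤ lam * ‖T y‖ := by
  set S := Set.range fun n : ℤ => (T ^ n) x with hS
  set X := Submodule.span ℝ S with hX
  -- every orbit point lies in Em
  have horb' : ∀ n : ℤ, (T ^ n) x ∈ Em := by
    intro n
    rcases le_or_gt 0 n with hn | hn
    · obtain ⟨m, rfl⟩ := Int.eq_ofNat_of_zero_le hn
      exact horb m
    · obtain ⟨m, rfl⟩ : ∃ m : ℕ, n = -(m : ℤ) := ⟨n.natAbs, by omega⟩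
      clear hn
      induction m with
      | zero => simp; exact hx
      | succ k ih =>
        have h1 : (T ^ (-(k + 1 : ℕ) : ℤ)) x = T.symm ((T ^ (-(k : ℕ) : ℤ)) x) := by
          have : (-(k + 1 : ℕ) : ℤ) = -1 + (-(k : ℕ) : ℤ) := by push_cast; ring
          rw [this, zpow_add, zpow_neg_one]
          rfl
        rw [h1]
        exact hTEm _ ih
  -- the span lies in Em
  have hXEm : X ≤ Em := Submodule.span_le.mpr (by
    rintro _ ⟨n, rfl⟩; exact horb' n)
  have hclosEm : X.topologicalClosure ≤ Em :=
    Submodule.topologicalClosure_minimal X hXEm hEmc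
  -- the closure is T-invariant
  have hTX : ∀ y ∈ X.topologicalClosure, T y ∈ X.topologicalClosure := by
    have hmap : X ≤ X.topologicalClosure.comap ((T : B →L[ℝ] B) : B →ₗ[ℝ] B) := by
      rw [hX, Submodule.span_le]
      rintro _ ⟨n, rfl⟩
      exact Submodule.le_topologicalClosure X
        (Submodule.subset_span ⟨1 + n, by show (T ^ (1 + n)) x = T ((T ^ n) x); rw [zpow_add, zpow_one]; rfl⟩)
    have hclosed : IsClosed ((X.topologicalClosure.comap ((T : B →L[ℝ] B) : B →ₗ[ℝ] B) : Submodule ℝ B) : Set B) :=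
      X.isClosed_topologicalClosure.preimage T.continuous
    intro y hy
    exact Submodule.topologicalClosure_minimal X hmap hclosed hy
  intro y hy
  have hy' : T y ∈ Em := hclosEm (hTX y hy)
  have := hexp _ hy'
  simpa using this
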